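/- Let κ be an infinite cardinal and X a meet-semilattice with |X| ≤ κ. Then there exists a countably incomplete ultrafilter U on κ which is X-good: for every monotone map f : X → U (meaning f(x) ∈ U for all x, and x ≤ y implies f(x) ⊆ f(y)) there exists g : X → U with g(x) ⊆ f(x) for all x ∈ X and g(x ⊓ y) = g(x) ∩ g(y) for all x, y ∈ X. -/

import Mathlib

open Cardinal Set

universe u

namespace Stmt2

noncomputable section

open scoped Classical

variable (I : Type u) [Infinite I]

/-- Index pairs for the Engelking–Karłowicz independent family. -/
def PP : Type u := (s : Finset I) × ({u : Finset I // u ⊆ s} → I)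

instance (s : Finset I) : Nonempty {u : Finset I // u ⊆ s} := ⟨⟨∅, by simp⟩⟩

instance (s : Finset I) : Fintype {u : Finset I // u ⊆ s} :=
  Fintype.subtype s.powerset fun _ => Finset.mem_powerset

theorem mk_PP : #(PP I) = #I := by
  apply le_antisymm
  · rw [PP, mk_sigma]
    have h1 : ∀ s : Finset I, #({u : Finset I // u ⊆ s} → I) ≤ #I := by
      intro s
      calc #({u : Finset I // u ⊆ s} → I)
          = Cardinal.lift.{u} #I ^ Cardinal.lift.{u} #{u : Finset I // u ⊆ s} := mk_arrow _ _
        _ = #I ^ ((Fintype.card {u : Finset I // u ⊆ s} : Cardinal)) := by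
            rw [Cardinal.lift_id, Cardinal.lift_id, Cardinal.mk_fintype ({u : Finset I // u ⊆ s})]
        _ = #I ^ (Fintype.card {u : Finset I // u ⊆ s}) := by rw [Cardinal.power_natCast]
        _ ≤ #I := Cardinal.power_nat_le (Cardinal.aleph0_le_mk I)
    calc Cardinal.sum (fun s : Finset I => #({u : Finset I // u ⊆ s} → I))
        ≤ Cardinal.sum (fun _ : Finset I => #I) := Cardinal.sum_le_sum _ _ h1
      _ = #(Finset I) * #I := by rw [Cardinal.sum_const']
      _ = #I * #I := by rw [Cardinal.mk_finset_of_infinite]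
      _ = #I := Cardinal.mul_eq_self (Cardinal.aleph0_le_mk I)
  · exact Cardinal.mk_le_of_injective (f := fun i => (⟨∅, fun _ => i⟩ : PP I))
      (by intro a b h; exact congrArg (fun p : PP I => p.2 ⟨∅, by simp⟩) h)

/-- A bijection between `I` and the index pairs. -/
def eI : I ≃ PP I := Classical.choice (Cardinal.eq.mp (mk_PP I).symm)

/-- The independent family, indexed by `Set I`. -/
def hfun (A : Set I) (i : I) : I :=
  (eI I i).2 ⟨(eI I i).1.filter (· ∈ A), Finset.filter_subset _ _⟩

/-- a separating point for two distinct sets -/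
def dsep (A A' : Set I) : I :=
  if h : ((A \ A') ∪ (A' \ A)).Nonempty then h.choose else Classical.arbitrary I

theorem dsep_spec {A A' : Set I} (h : A ≠ A') :
    dsep I A A' ∈ (A \ A') ∪ (A' \ A) := by
  have hne : ((A \ A') ∪ (A' \ A)).Nonempty := by
    rcases Set.eq_empty_or_nonempty ((A \ A') ∪ (A' \ A)) with he | hne
    · exfalso; apply h
      rw [Set.union_empty_iff] at he
      ext i; constructor <;> intro hi
      · by_contra hx; exact absurd (Set.eq_empty_iff_forall_notMem.mp he.1 i) (by simp [hi, hx])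
      · by_contra hx; exact absurd (Set.eq_empty_iff_forall_notMem.mp he.2 i) (by simp [hi, hx])
    · exact hne
  rw [dsep, dif_pos hne]; exact hne.choose_spec

/-- Pure independence of the family `hfun`. -/
theorem pure_indep (s : Finset (Set I)) (v : Set I → I) :
    ∃ p : I, ∀ A ∈ s, hfun I A p = v A := by
  set t : Finset I := (s ×ˢ s).image fun q => dsep I q.1 q.2 with ht
  have hsep : ∀ A ∈ s, ∀ A' ∈ s, t.filter (· ∈ A) = t.filter (· ∈ A') → A = A' := by
    intro A hA A' hA' hf
    by_contra hne
    have hdt : dsep I A A' ∈ t := Finset.mem_image.mpr ⟨⟨A, A'⟩, Finset.mem_product.mpr ⟨hA, hA'⟩, rfl⟩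
    have := dsep_spec I hne
    have hiff : dsep I A A' ∈ A ↔ dsep I A A' ∈ A' := by
      constructor <;> intro hm
      · exact (Finset.mem_filter.mp (hf ▸ Finset.mem_filter.mpr ⟨hdt, hm⟩)).2
      · exact (Finset.mem_filter.mp (hf.symm ▸ Finset.mem_filter.mpr ⟨hdt, hm⟩)).2
    rcases this with h1 | h2
    · exact h1.2 (hiff.mp h1.1)
    · exact h2.2 (hiff.mpr h2.1)
  set φ : {u : Finset I // u ⊆ t} → I := fun u =>
    if h : ∃ A ∈ s, u.1 = t.filter (· ∈ A) then v h.choose else Classical.arbitrary I with hφ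
  refine ⟨(eI I).symm ⟨t, φ⟩, ?_⟩
  intro A hA
  suffices h : ∀ X : PP I, X = ⟨t, φ⟩ →
      X.2 ⟨X.1.filter (· ∈ A), Finset.filter_subset _ _⟩ = v A by
    exact h _ (Equiv.apply_symm_apply _ _)
  intro X hXeq
  subst hXeq
  show φ ⟨t.filter (· ∈ A), Finset.filter_subset _ _⟩ = v A
  have hex : ∃ A' ∈ s, (t.filter (· ∈ A) : Finset I) = t.filter (· ∈ A') := ⟨A, hA, rfl⟩
  rw [hφ]
  simp only []
  rw [dif_pos hex]
  have hspec := hex.choose_spec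
  congr 1
  exact (hsep _ hspec.1 _ hA hspec.2.symm)

/-- The pattern set determined by finitely many constraints on the family. -/
def patt (s : Finset (Set I)) (v : Set I → I) : Set I :=
  {p | ∀ A ∈ s, hfun I A p = v A}

/-- Independence of the (unused part of the) family modulo the family `D` of sets. -/
def indep (D used : Set (Set I)) : Prop :=
  ∀ t : Finset (Set I), ↑t ⊆ D → ∀ s : Finset (Set I), ∀ v : Set I → I,
    Disjoint (↑s : Set (Set I)) used → (⋂₀ (↑t : Set (Set I)) ∩ patt I s v).Nonempty

/-- a surjection onto `ℕ` -/
def eN : I → ℕ := Function.invFun (Infinite.natEmbedding I)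

theorem eN_surj : Function.Surjective (eN I) :=
  Function.invFun_surjective (Infinite.natEmbedding I).injective

/-- The sets witnessing countable incompleteness. -/
def Kset (n : ℕ) : Set I := {i | n ≤ eN I (hfun I ∅ i)}

theorem Kset_antitone {m n : ℕ} (h : m ≤ n) : Kset I n ⊆ Kset I m :=
  fun _ hi => le_trans h hi

theorem Kset_iInter : ⋂ n : ℕ, Kset I n = ∅ := by
  ext i
  simp only [Set.mem_iInter, Set.mem_empty_iff_false, iff_false, not_forall]
  exact ⟨eN I (hfun I ∅ i) + 1, by simp [Kset]⟩

def gens0 : Set (Set I) := Set.range (Kset I)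

def used0 : Set (Set I) := {(∅ : Set I)}

theorem indep0 : indep I (gens0 I) (used0 I) := by
  intro t ht s v hdisj
  -- find a single N with Kset N ⊆ every member of t
  set nf : Set I → ℕ := fun B => if h : ∃ n, B = Kset I n then h.choose else 0 with hnf
  set N := t.sup nf with hN
  have htN : ∀ B ∈ t, Kset I N ⊆ B := by
    intro B hB
    obtain ⟨n, hn⟩ := ht hB
    have hex : ∃ n, B = Kset I n := ⟨n, hn.symm⟩
    have : B = Kset I (nf B) := by rw [hnf]; simp only []; rw [dif_pos hex]; exact hex.choose_spec
    rw [this]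
    exact Kset_antitone I (Finset.le_sup hB)
  obtain ⟨w, hw⟩ := eN_surj I N
  obtain ⟨p, hp⟩ := pure_indep I (insert (∅ : Set I) s) (Function.update v ∅ w)
  have hp0 : hfun I ∅ p = w := by
    have := hp ∅ (Finset.mem_insert_self _ _)
    rwa [Function.update_self] at this
  refine ⟨p, ?_, ?_⟩
  · intro B hB
    refine htN B hB ?_
    show N ≤ eN I (hfun I ∅ p)
    rw [hp0, hw]
  · intro A hA
    have hne : A ≠ (∅ : Set I) := by
      intro hcon
      exact (Set.disjoint_left.mp hdisj (by exact_mod_cast hA)) (by rw [hcon]; rfl)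
    have := hp A (Finset.mem_insert_of_mem hA)
    rwa [Function.update_of_ne hne] at this

section Step

variable (X : Type u) [SemilatticeInf X] [Nonempty X]

/-- a surjection from `I` onto `X` -/
def sigX (hX : #X ≤ #I) : I → X :=
  Function.invFun (Classical.choice (Cardinal.le_def _ _ |>.mp hX) : X ↪ I)

theorem sigX_surj (hX : #X ≤ #I) : Function.Surjective (sigX I X hX) :=
  Function.invFun_surjective (Classical.choice (Cardinal.le_def _ _ |>.mp hX) : X ↪ I).injective

variable {I X}

theorem exists_fresh {used : Set (Set I)} (h : #used < #(Set I)) : ∃ A : Set I, A ∉ used := by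
  by_contra hcon
  push_neg at hcon
  have : used = Set.univ := Set.eq_univ_iff_forall.mpr hcon
  rw [this, Cardinal.mk_univ] at h
  exact lt_irrefl _ h

theorem step (hX : #X ≤ #I) (D used : Set (Set I)) (hind : indep I D used)
    (hcard : #used < #(Set I)) (f : X → Set I) (hf : Monotone f) :
    ∃ D' used' : Set (Set I), D ⊆ D' ∧ used ⊆ used' ∧ indep I D' used' ∧
      #used' ≤ #used + #I ∧
      ((∃ x, (f x)ᶜ ∈ D') ∨
        ∃ g : X → Set I, (∀ x, g x ∈ D') ∧ (∀ x, g x ⊆ f x) ∧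
          ∀ x y, g (x ⊓ y) = g x ∩ g y) := by
  classical
  by_cases hA : ∃ x, indep I (insert (f x)ᶜ D) used
  · obtain ⟨x, hx⟩ := hA
    exact ⟨insert (f x)ᶜ D, used, Set.subset_insert _ _, subset_rfl, hx,
      le_self_add, Or.inl ⟨x, Set.mem_insert _ _⟩⟩
  push_neg at hA
  -- extract, for every `x`, finite data witnessing the failure
  have hdata : ∀ x : X, ∃ (t' s' : Finset (Set I)) (v' : Set I → I),
      (↑t' : Set (Set I)) ⊆ D ∧ Disjoint (↑s' : Set (Set I)) used ∧
      ⋂₀ (↑t' : Set (Set I)) ∩ patt I s' v' ⊆ f x := by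
    intro x
    have hni := hA x
    rw [indep] at hni
    push_neg at hni
    obtain ⟨t, ht, s, v, hdisj, hempty⟩ := hni
    by_cases hc : (f x)ᶜ ∈ t
    · refine ⟨t.erase (f x)ᶜ, s, v, ?_, hdisj, ?_⟩
      · intro B hB
        obtain ⟨hBne, hBt⟩ := Finset.mem_coe.mp hB |> Finset.mem_erase.mp
        rcases ht hBt with h1 | h2
        · exact absurd h1 hBne
        · exact h2
      · intro p hp
        by_contra hpf
        have hpt : p ∈ ⋂₀ (↑t : Set (Set I)) := by
          intro B hB
          rcases eq_or_ne B (f x)ᶜ with rfl | hne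
          · exact hpf
          · exact hp.1 B (Finset.mem_coe.mpr (Finset.mem_erase.mpr ⟨hne, hB⟩))
        have : p ∈ ⋂₀ (↑t : Set (Set I)) ∩ patt I s v := ⟨hpt, hp.2⟩
        rw [hempty] at this
        exact this
    · exfalso
      have htD : (↑t : Set (Set I)) ⊆ D := by
        intro B hB
        rcases ht hB with h1 | h2
        · exact absurd (h1 ▸ hB) (by exact_mod_cast hc)
        · exact h2
      have := hind t htD s v hdisj
      rw [hempty] at this
      exact Set.not_nonempty_empty this
  choose tf sf vf htf hsf hsub using hdata
  -- a fresh index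
  set bigused : Set (Set I) := used ∪ ⋃ x : X, (↑(sf x) : Set (Set I)) with hbig
  have hbigcard : #bigused < #(Set I) := by
    have h1 : #(⋃ x : X, (↑(sf x) : Set (Set I))) ≤ #I := by
      calc #(⋃ x : X, (↑(sf x) : Set (Set I)))
          ≤ Cardinal.sum (fun x : X => #(↑(sf x) : Set (Set I))) :=
            Cardinal.mk_iUnion_le_sum_mk
        _ ≤ Cardinal.sum (fun _ : X => ℵ₀) :=
            Cardinal.sum_le_sum _ _ (fun x => (Cardinal.lt_aleph0_of_finite _).le)
        _ = #X * ℵ₀ := Cardinal.sum_const' _ _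
        _ ≤ #I * #I := mul_le_mul' hX (Cardinal.aleph0_le_mk I)
        _ = #I := Cardinal.mul_eq_self (Cardinal.aleph0_le_mk I)
    have hIlt : #I < #(Set I) := by
      rw [Cardinal.mk_set]; exact Cardinal.cantor _
    calc #bigused ≤ #used + #(⋃ x : X, (↑(sf x) : Set (Set I))) := Cardinal.mk_union_le _ _
      _ < #(Set I) := Cardinal.add_lt_of_lt
          (le_trans (Cardinal.aleph0_le_mk I) hIlt.le) hcard (lt_of_le_of_lt h1 hIlt)
  obtain ⟨Ah, hAh⟩ := exists_fresh hbigcard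
  -- the multiplicative refinement
  set σ : I → X := sigX I X hX with hσ
  set g : X → Set I := fun x => {p | σ (hfun I Ah p) ≤ x ∧ p ∈ f (σ (hfun I Ah p))} with hg
  have gsub : ∀ x, g x ⊆ f x := fun x p hp => hf hp.1 hp.2
  have gmult : ∀ x y, g (x ⊓ y) = g x ∩ g y := by
    intro x y
    ext p
    simp only [hg, Set.mem_setOf_eq, Set.mem_inter_iff, le_inf_iff]
    tauto
  have gmono : Monotone g := fun x y hxy p hp => ⟨hp.1.trans hxy, hp.2⟩
  refine ⟨D ∪ Set.range g, insert Ah bigused, Set.subset_union_left,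
    (Set.subset_union_left).trans (Set.subset_insert _ _), ?_, ?_, Or.inr
      ⟨g, fun x => Or.inr ⟨x, rfl⟩, gsub, gmult⟩⟩
  swap
  · calc #(insert Ah bigused : Set (Set I)) ≤ #bigused + 1 := Cardinal.mk_insert_le
      _ ≤ (#used + #I) + 1 := by
          refine add_le_add_left ?_ 1
          calc #bigused ≤ #used + #(⋃ x : X, (↑(sf x) : Set (Set I))) := Cardinal.mk_union_le _ _
            _ ≤ #used + #I := by
                refine add_le_add_right ?_ _
                calc #(⋃ x : X, (↑(sf x) : Set (Set I)))
                    ≤ Cardinal.sum (fun x : X => #(↑(sf x) : Set (Set I))) :=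
                      Cardinal.mk_iUnion_le_sum_mk
                  _ ≤ Cardinal.sum (fun _ : X => ℵ₀) :=
                      Cardinal.sum_le_sum _ _ (fun x => (Cardinal.lt_aleph0_of_finite _).le)
                  _ = #X * ℵ₀ := Cardinal.sum_const' _ _
                  _ ≤ #I * #I := mul_le_mul' hX (Cardinal.aleph0_le_mk I)
                  _ = #I := Cardinal.mul_eq_self (Cardinal.aleph0_le_mk I)
      _ = #used + #I := by
          rw [add_assoc]
          congr 1
          exact Cardinal.add_one_eq (Cardinal.aleph0_le_mk I)
  -- independence is preserved
  intro t ht s v hdisj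
  set tD : Finset (Set I) := t.filter (· ∈ D) with htD
  set tg : Finset (Set I) := t.filter (· ∉ D) with htg
  have htDD : (↑tD : Set (Set I)) ⊆ D := fun B hB => (Finset.mem_filter.mp hB).2
  have hdisj' : Disjoint (↑s : Set (Set I)) used :=
    hdisj.mono_right ((Set.subset_union_left).trans (Set.subset_insert _ _))
  by_cases hne : tg.Nonempty
  · set xs : Set I → X := fun B => if h : ∃ x, g x = B then h.choose else Classical.arbitrary X
      with hxs
    set xstar := tg.inf' hne xs with hxstar
    have hginf : g xstar ⊆ ⋂₀ (↑tg : Set (Set I)) := by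
      intro p hp B hB
      have hBrange : ∃ x, g x = B := by
        have hBt : B ∈ t := (Finset.mem_filter.mp hB).1
        have hBnD : B ∉ D := (Finset.mem_filter.mp hB).2
        rcases ht hBt with h1 | h2
        · exact absurd h1 hBnD
        · exact h2
      have hBeq : g (xs B) = B := by
        rw [hxs]; simp only []; rw [dif_pos hBrange]; exact hBrange.choose_spec
      rw [← hBeq]
      exact gmono (Finset.inf'_le xs hB) hp
    obtain ⟨w, hwx⟩ := sigX_surj I X hX xstar
    -- the combined pattern
    set v'' : Set I → I := fun A =>
      if A ∈ s then v A else if A ∈ sf xstar then vf xstar A else w with hv''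
    have hAhs : Ah ∉ s := by
      intro hcon
      exact Set.disjoint_left.mp hdisj (Finset.mem_coe.mpr hcon)
        (Set.mem_insert _ _)
    have hAhsf : Ah ∉ sf xstar := by
      intro hcon
      exact hAh (Set.mem_union_right _ (Set.mem_iUnion.mpr ⟨xstar, Finset.mem_coe.mpr hcon⟩))
    have hssf : ∀ A ∈ sf xstar, A ∉ s := by
      intro A hAsf hcon
      refine Set.disjoint_left.mp hdisj (Finset.mem_coe.mpr hcon) ?_
      exact Set.mem_insert_of_mem _ (Set.mem_union_right _
        (Set.mem_iUnion.mpr ⟨xstar, Finset.mem_coe.mpr hAsf⟩))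
    have hcomb := hind (tD ∪ tf xstar)
      (by
        rw [Finset.coe_union]
        exact Set.union_subset htDD (htf xstar))
      (insert Ah (s ∪ sf xstar)) v''
      (by
        rw [Finset.coe_insert, Finset.coe_union]
        refine Set.disjoint_left.mpr ?_
        intro A hA'
        rcases Set.mem_insert_iff.mp hA' with rfl | hA''
        · intro hcon; exact hAh (Set.mem_union_left _ hcon)
        · rcases hA'' with h1 | h2
          · exact Set.disjoint_left.mp hdisj' h1
          · exact Set.disjoint_left.mp (hsf xstar) h2)
    obtain ⟨p, hp1, hp2⟩ := hcomb
    have hpAh : hfun I Ah p = w := by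
      have := hp2 Ah (Finset.mem_insert_self _ _)
      rw [hv''] at this
      simpa only [if_neg hAhs, if_neg hAhsf] using this
    have hpsf : p ∈ patt I (sf xstar) (vf xstar) := by
      intro A hA'
      have := hp2 A (Finset.mem_insert_of_mem (Finset.mem_union_right _ hA'))
      rw [hv''] at this
      simpa only [if_neg (hssf A hA'), if_pos hA'] using this
    have hps : p ∈ patt I s v := by
      intro A hA'
      have := hp2 A (Finset.mem_insert_of_mem (Finset.mem_union_left _ hA'))
      rw [hv''] at this
      simpa only [if_pos hA'] using this
    have hpf : p ∈ f xstar := by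
      refine hsub xstar ⟨?_, hpsf⟩
      intro B hB
      exact hp1 B (Finset.mem_coe.mpr (Finset.mem_union_right _ (Finset.mem_coe.mp hB)))
    have hwx' : σ w = xstar := hwx
    have hpg : p ∈ g xstar := by
      refine ⟨?_, ?_⟩
      · rw [hpAh, hwx']
      · rw [hpAh, hwx']; exact hpf
    refine ⟨p, ?_, hps⟩
    intro B hB
    by_cases hBD : B ∈ D
    · exact hp1 B (Finset.mem_coe.mpr (Finset.mem_union_left _
        (Finset.mem_filter.mpr ⟨Finset.mem_coe.mp hB, hBD⟩)))
    · exact hginf hpg B (Finset.mem_coe.mpr (Finset.mem_filter.mpr ⟨Finset.mem_coe.mp hB, hBD⟩))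
  · -- no new sets are involved
    have httD : (↑t : Set (Set I)) ⊆ D := by
      intro B hB
      by_contra hBD
      exact hne ⟨B, Finset.mem_filter.mpr ⟨Finset.mem_coe.mp hB, hBD⟩⟩
    exact hind t httD s v hdisj'

end Step

section Rec

variable (I : Type u) [Infinite I] (X : Type u) [SemilatticeInf X] [Nonempty X]

/-- The well-ordered index type for the transfinite recursion. -/
def TT : Type u := ((2 : Cardinal.{u}) ^ #I).ord.ToType

noncomputable instance : LinearOrder (TT I) := linearOrder_toType _

instance : WellFoundedLT (TT I) := wellFoundedLT_toType _

instance TT_nonempty : Nonempty (TT I) := by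
  rw [TT, Ordinal.nonempty_toType_iff, Ne, Cardinal.ord_eq_zero]
  intro h
  exact absurd h (ne_of_gt (lt_of_le_of_lt (zero_le (a := #I)) (Cardinal.cantor #I)))

theorem mk_TT : #(TT I) = 2 ^ #I := by
  rw [TT, Cardinal.mk_toType, Cardinal.card_ord]

theorem seg_lt (t : TT I) : #(Set.Iio t) < (2 : Cardinal.{u}) ^ #I :=
  Cardinal.mk_Iio_toType_ord_lt t

theorem mk_arrow_le (hX : #X ≤ #I) : #(X → Set I) ≤ (2 : Cardinal.{u}) ^ #I := by
  have h1 : #(X → Set I) = #(Set I) ^ #X := by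
    rw [Cardinal.mk_arrow, Cardinal.lift_id, Cardinal.lift_id]
  rw [h1, Cardinal.mk_set, ← Cardinal.power_mul]
  refine Cardinal.power_le_power_left (by norm_num) ?_
  calc #I * #X ≤ #I * #I := mul_le_mul' le_rfl hX
    _ = #I := Cardinal.mul_eq_self (Cardinal.aleph0_le_mk I)

/-- enumeration of all maps `X → Set I` along the recursion -/
def enumF (hX : #X ≤ #I) : TT I → (X → Set I) :=
  Function.invFun (Classical.choice ((Cardinal.le_def _ _).mp
    ((mk_arrow_le I X hX).trans_eq (mk_TT I).symm)) : (X → Set I) ↪ TT I)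

theorem enumF_surj (hX : #X ≤ #I) : Function.Surjective (enumF I X hX) :=
  Function.invFun_surjective (Classical.choice ((Cardinal.le_def _ _).mp
    ((mk_arrow_le I X hX).trans_eq (mk_TT I).symm)) : (X → Set I) ↪ TT I).injective

variable {I X}

/-- One step of the recursion, using the step lemma when applicable. -/
def nextBundle (hX : #X ≤ #I) (D used : Set (Set I)) (f : X → Set I) :
    Set (Set I) × Set (Set I) :=
  if h : indep I D used ∧ #used < #(Set I) ∧ Monotone f then
    ⟨(step hX D used h.1 h.2.1 f h.2.2).choose,
      (step hX D used h.1 h.2.1 f h.2.2).choose_spec.choose⟩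
  else (D, used)

theorem nextBundle_spec (hX : #X ≤ #I) {D used : Set (Set I)} {f : X → Set I}
    (h : indep I D used ∧ #used < #(Set I) ∧ Monotone f) :
    D ⊆ (nextBundle hX D used f).1 ∧ used ⊆ (nextBundle hX D used f).2 ∧
      indep I (nextBundle hX D used f).1 (nextBundle hX D used f).2 ∧
      #(nextBundle hX D used f).2 ≤ #used + #I ∧
      ((∃ x, (f x)ᶜ ∈ (nextBundle hX D used f).1) ∨
        ∃ g : X → Set I, (∀ x, g x ∈ (nextBundle hX D used f).1) ∧ (∀ x, g x ⊆ f x) ∧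
          ∀ x y, g (x ⊓ y) = g x ∩ g y) := by
  rw [nextBundle, dif_pos h]
  exact (step hX D used h.1 h.2.1 f h.2.2).choose_spec.choose_spec

theorem nextBundle_neg (hX : #X ≤ #I) {D used : Set (Set I)} {f : X → Set I}
    (h : ¬(indep I D used ∧ #used < #(Set I) ∧ Monotone f)) :
    nextBundle hX D used f = (D, used) := dif_neg h

/-- The cumulative stages of the recursion. -/
def stage (hX : #X ≤ #I) : TT I → Set (Set I) × Set (Set I) :=
  (IsWellFounded.wf (α := TT I) (r := (· < ·))).fix fun t rec =>
    nextBundle hX (gens0 I ∪ ⋃ s : Set.Iio t, (rec s s.2).1)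
      (used0 I ∪ ⋃ s : Set.Iio t, (rec s s.2).2)
      (enumF I X hX t)

def Dprev (hX : #X ≤ #I) (t : TT I) : Set (Set I) :=
  gens0 I ∪ ⋃ s : Set.Iio t, (stage hX s).1

def Uprev (hX : #X ≤ #I) (t : TT I) : Set (Set I) :=
  used0 I ∪ ⋃ s : Set.Iio t, (stage hX s).2

theorem stage_eq (hX : #X ≤ #I) (t : TT I) :
    stage hX t = nextBundle hX (Dprev hX t) (Uprev hX t) (enumF I X hX t) := by
  rw [stage, WellFounded.fix_eq]
  rfl

/-- The master invariant of the recursion. -/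
def Inv (hX : #X ≤ #I) (t : TT I) : Prop :=
  gens0 I ⊆ (stage hX t).1 ∧ used0 I ⊆ (stage hX t).2 ∧
  (∀ s : TT I, s < t → (stage hX s).1 ⊆ (stage hX t).1 ∧ (stage hX s).2 ⊆ (stage hX t).2) ∧
  indep I (stage hX t).1 (stage hX t).2 ∧
  #(stage hX t).2 ≤ #I + #(Set.Iio t) ∧
  (Monotone (enumF I X hX t) →
    (∃ x, (enumF I X hX t x)ᶜ ∈ (stage hX t).1) ∨
      ∃ g : X → Set I, (∀ x, g x ∈ (stage hX t).1) ∧ (∀ x, g x ⊆ enumF I X hX t x) ∧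
        ∀ x y, g (x ⊓ y) = g x ∩ g y)

theorem inv_all (hX : #X ≤ #I) : ∀ t : TT I, Inv hX t := by
  intro t
  induction t using WellFoundedLT.induction with
  | ind t IH =>
  classical
  -- every finite subset of `Dprev` is captured by a single earlier stage or `gens0`
  have hbound : ∀ tt : Finset (Set I), (↑tt : Set (Set I)) ⊆ Dprev hX t →
      (∃ s0 : TT I, s0 < t ∧ (↑tt : Set (Set I)) ⊆ (stage hX s0).1) ∨
        (↑tt : Set (Set I)) ⊆ gens0 I := by
    intro tt htt
    by_cases hS : (tt.filter (· ∉ gens0 I)).Nonempty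
    · set stf : Set I → TT I := fun B =>
        if h : ∃ s : TT I, s < t ∧ B ∈ (stage hX s).1 then h.choose
        else Classical.arbitrary (TT I) with hstf
      have hstf_spec : ∀ B ∈ tt.filter (· ∉ gens0 I), stf B < t ∧ B ∈ (stage hX (stf B)).1 := by
        intro B hB
        have hBtt : B ∈ tt := (Finset.mem_filter.mp hB).1
        have hBg : B ∉ gens0 I := (Finset.mem_filter.mp hB).2
        have hex : ∃ s : TT I, s < t ∧ B ∈ (stage hX s).1 := by
          rcases htt (Finset.mem_coe.mpr hBtt) with h1 | h2
          · exact absurd h1 hBg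
          · obtain ⟨s, hs⟩ := Set.mem_iUnion.mp h2
            exact ⟨s.1, s.2, hs⟩
        rw [hstf]; simp only []; rw [dif_pos hex]
        exact hex.choose_spec
      set s0 := (tt.filter (· ∉ gens0 I)).sup' hS stf with hs0
      have hs0t : s0 < t := by
        rw [hs0, Finset.sup'_lt_iff]
        intro B hB
        exact (hstf_spec B hB).1
      refine Or.inl ⟨s0, hs0t, ?_⟩
      intro B hB
      by_cases hBg : B ∈ gens0 I
      · exact (IH s0 hs0t).1 hBg
      · have hBf : B ∈ tt.filter (· ∉ gens0 I) :=
          Finset.mem_filter.mpr ⟨Finset.mem_coe.mp hB, hBg⟩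
        have hle : stf B ≤ s0 := Finset.le_sup' stf hBf
        rcases lt_or_eq_of_le hle with hlt | heq
        · exact ((IH s0 hs0t).2.2.1 (stf B) hlt).1 (hstf_spec B hBf).2
        · rw [← heq]; exact (hstf_spec B hBf).2
    · refine Or.inr ?_
      intro B hB
      by_contra hBg
      exact hS ⟨B, Finset.mem_filter.mpr ⟨Finset.mem_coe.mp hB, hBg⟩⟩
  -- previous stages inclusions into `Dprev`/`Uprev`
  have hDst : ∀ s : TT I, s < t → (stage hX s).1 ⊆ Dprev hX t := by
    intro s hs B hB
    exact Set.mem_union_right _ (Set.mem_iUnion.mpr ⟨⟨s, hs⟩, hB⟩)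
  have hUst : ∀ s : TT I, s < t → (stage hX s).2 ⊆ Uprev hX t := by
    intro s hs B hB
    exact Set.mem_union_right _ (Set.mem_iUnion.mpr ⟨⟨s, hs⟩, hB⟩)
  -- independence at `Dprev`
  have hindprev : indep I (Dprev hX t) (Uprev hX t) := by
    intro tt htt s v hdisj
    rcases hbound tt htt with ⟨s0, hs0t, hsub⟩ | hsub
    · exact (IH s0 hs0t).2.2.2.1 tt hsub s v (hdisj.mono_right (hUst s0 hs0t))
    · exact indep0 I tt hsub s v (hdisj.mono_right (Set.subset_union_left))
  -- cardinality of `Uprev`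
  have hcardprev : #(Uprev hX t) ≤ #I + #(Set.Iio t) := by
    have h1 : #(⋃ s : Set.Iio t, (stage hX s.1).2) ≤ #(Set.Iio t) * (#I + #(Set.Iio t)) := by
      calc #(⋃ s : Set.Iio t, (stage hX s.1).2)
          ≤ Cardinal.sum (fun s : Set.Iio t => #((stage hX s.1).2)) := Cardinal.mk_iUnion_le_sum_mk
        _ ≤ Cardinal.sum (fun _ : Set.Iio t => #I + #(Set.Iio t)) := by
            refine Cardinal.sum_le_sum _ _ (fun s => ?_)
            refine le_trans ((IH s.1 s.2).2.2.2.2.1) ?_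
            refine add_le_add_right ?_ _
            exact Cardinal.mk_le_of_injective (f := fun u : Set.Iio s.1 =>
              (⟨u.1, Set.mem_Iio.mpr (lt_trans (Set.mem_Iio.mp u.2) (Set.mem_Iio.mp s.2))⟩ :
                Set.Iio t))
              (by intro a b hab; exact Subtype.ext (by simpa [Subtype.ext_iff] using hab))
        _ = #(Set.Iio t) * (#I + #(Set.Iio t)) := Cardinal.sum_const' _ _
    have hμ : ℵ₀ ≤ #I + #(Set.Iio t) := le_trans (Cardinal.aleph0_le_mk I) le_self_add
    calc #(Uprev hX t) ≤ #(used0 I) + #(⋃ s : Set.Iio t, (stage hX s.1).2) :=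
          Cardinal.mk_union_le _ _
      _ ≤ 1 + #(Set.Iio t) * (#I + #(Set.Iio t)) := by
          refine add_le_add ?_ h1
          rw [used0, Cardinal.mk_singleton]
      _ ≤ (#I + #(Set.Iio t)) + (#I + #(Set.Iio t)) := by
          refine add_le_add (le_trans (by norm_num) hμ) ?_
          calc #(Set.Iio t) * (#I + #(Set.Iio t))
              ≤ (#I + #(Set.Iio t)) * (#I + #(Set.Iio t)) := mul_le_mul' le_add_self le_rfl
            _ = #I + #(Set.Iio t) := Cardinal.mul_eq_self hμ
      _ = #I + #(Set.Iio t) := Cardinal.add_eq_self hμ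
  have hcardlt : #(Uprev hX t) < #(Set I) := by
    refine lt_of_le_of_lt hcardprev ?_
    rw [Cardinal.mk_set]
    exact Cardinal.add_lt_of_lt
      (le_trans (Cardinal.aleph0_le_mk I) (Cardinal.cantor #I).le)
      (Cardinal.cantor #I) (seg_lt I t)
  -- now unfold the stage
  have hst := stage_eq hX t
  by_cases hmono : Monotone (enumF I X hX t)
  · have hcond : indep I (Dprev hX t) (Uprev hX t) ∧ #(Uprev hX t) < #(Set I) ∧
        Monotone (enumF I X hX t) := ⟨hindprev, hcardlt, hmono⟩
    have hspec := nextBundle_spec hX hcond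
    rw [← hst] at hspec
    obtain ⟨hD, hU, hind, hcard, hhandled⟩ := hspec
    refine ⟨(Set.subset_union_left).trans hD, (Set.subset_union_left).trans hU,
      fun s hs => ⟨(hDst s hs).trans hD, (hUst s hs).trans hU⟩, hind, ?_, fun _ => hhandled⟩
    calc #((stage hX t).2) ≤ #(Uprev hX t) + #I := hcard
      _ ≤ (#I + #(Set.Iio t)) + #I := add_le_add_left hcardprev _
      _ = #I + #(Set.Iio t) := by
          rw [add_right_comm, Cardinal.add_eq_self (Cardinal.aleph0_le_mk I)]
  · have hneg : ¬(indep I (Dprev hX t) (Uprev hX t) ∧ #(Uprev hX t) < #(Set I) ∧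
        Monotone (enumF I X hX t)) := fun h => hmono h.2.2
    rw [nextBundle_neg hX hneg] at hst
    unfold Inv
    rw [hst]
    exact ⟨Set.subset_union_left, Set.subset_union_left,
      fun s hs => ⟨hDst s hs, hUst s hs⟩, hindprev, hcardprev, fun h => absurd h hmono⟩

end Rec

section Core

variable {I : Type u} [Infinite I] {X : Type u} [SemilatticeInf X] [Nonempty X]

theorem core (hX : #X ≤ #I) :
    ∃ U : Ultrafilter I,
      (∃ K : ℕ → Set I, (∀ n : ℕ, K n ∈ U) ∧ ⋂ n : ℕ, K n = ∅) ∧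
      (∀ f : X → Set I, (∀ x : X, f x ∈ U) → Monotone f →
        ∃ g : X → Set I, (∀ x : X, g x ∈ U) ∧ (∀ x : X, g x ⊆ f x) ∧
          ∀ x y : X, g (x ⊓ y) = g x ∩ g y) := by
  classical
  set Dfin : Set (Set I) := gens0 I ∪ ⋃ t : TT I, (stage hX t).1 with hDfin
  -- every finite subset of `Dfin` lies in a single stage
  have hstagesub : ∀ t : TT I, (stage hX t).1 ⊆ Dfin := by
    intro t B hB
    exact Set.mem_union_right _ (Set.mem_iUnion.mpr ⟨t, hB⟩)
  have hbound : ∀ tt : Finset (Set I), (↑tt : Set (Set I)) ⊆ Dfin →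
      ∃ t0 : TT I, (↑tt : Set (Set I)) ⊆ (stage hX t0).1 := by
    intro tt htt
    set stf : Set I → TT I := fun B =>
      if h : ∃ t : TT I, B ∈ (stage hX t).1 then h.choose
      else Classical.arbitrary (TT I) with hstf
    have hstf_spec : ∀ B ∈ tt, B ∈ (stage hX (stf B)).1 ∨ B ∈ gens0 I := by
      intro B hB
      rcases htt (Finset.mem_coe.mpr hB) with h1 | h2
      · exact Or.inr h1
      · obtain ⟨t, ht⟩ := Set.mem_iUnion.mp h2
        have hex : ∃ t : TT I, B ∈ (stage hX t).1 := ⟨t, ht⟩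
        refine Or.inl ?_
        rw [hstf]; simp only []; rw [dif_pos hex]
        exact hex.choose_spec
    by_cases hne : tt.Nonempty
    · set t0 := tt.sup' hne stf with ht0
      refine ⟨t0, ?_⟩
      intro B hB
      rcases hstf_spec B (Finset.mem_coe.mp hB) with h1 | h2
      · have hle : stf B ≤ t0 := Finset.le_sup' stf (Finset.mem_coe.mp hB)
        rcases lt_or_eq_of_le hle with hlt | heq
        · exact ((inv_all hX t0).2.2.1 (stf B) hlt).1 h1
        · rw [← heq]; exact h1
      · exact (inv_all hX t0).1 h2
    · rw [Finset.not_nonempty_iff_eq_empty] at hne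
      exact ⟨Classical.arbitrary (TT I), by rw [hne]; simp⟩
  have hproper : ∀ tt : Finset (Set I), (↑tt : Set (Set I)) ⊆ Dfin →
      (⋂₀ (↑tt : Set (Set I))).Nonempty := by
    intro tt htt
    obtain ⟨t0, hsub⟩ := hbound tt htt
    have := (inv_all hX t0).2.2.2.1 tt hsub ∅ (fun _ => Classical.arbitrary I)
      (by simp)
    obtain ⟨p, hp1, _⟩ := this
    exact ⟨p, hp1⟩
  -- the generated filter is proper
  haveI hNeBot : (Filter.generate Dfin).NeBot := by
    rw [Filter.neBot_iff]
    intro hbot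
    have hmem : (∅ : Set I) ∈ Filter.generate Dfin := by rw [hbot]; exact Filter.mem_bot
    obtain ⟨tt, httD, httfin, htt⟩ := Filter.mem_generate_iff.mp hmem
    obtain ⟨p, hp⟩ := hproper httfin.toFinset (by rwa [Set.Finite.coe_toFinset])
    rw [Set.Finite.coe_toFinset] at hp
    exact htt hp
  refine ⟨Ultrafilter.of (Filter.generate Dfin), ?_, ?_⟩
  · refine ⟨Kset I, fun n => ?_, Kset_iInter I⟩
    exact Ultrafilter.of_le (Filter.generate Dfin)
      (Filter.mem_generate_of_mem (Set.mem_union_left _ ⟨n, rfl⟩))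
  · intro f hfU hmono
    obtain ⟨t, ht⟩ := enumF_surj I X hX f
    have hhandled := (inv_all hX t).2.2.2.2.2 (ht.symm ▸ hmono)
    rw [ht] at hhandled
    rcases hhandled with ⟨x, hx⟩ | ⟨g, hg1, hg2, hg3⟩
    · exfalso
      have hcompl : (f x)ᶜ ∈ Ultrafilter.of (Filter.generate Dfin) :=
        Ultrafilter.of_le (Filter.generate Dfin)
          (Filter.mem_generate_of_mem (hstagesub t hx))
      have hinter := Filter.inter_mem (hfU x) hcompl
      rw [Set.inter_compl_self] at hinter
      exact Filter.empty_notMem _ hinter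
    · exact ⟨g, fun x => Ultrafilter.of_le (Filter.generate Dfin)
        (Filter.mem_generate_of_mem (hstagesub t (hg1 x))), hg2, hg3⟩

end Core


end

end Stmt2

/-- For every infinite cardinal `κ` and every meet-semilattice `X`
with `|X| ≤ κ` there is a countably incomplete, `X`-good ultrafilter on `κ`. -/
theorem stmt_2 (κ : Cardinal.{u}) (hκ : Cardinal.aleph0 ≤ κ)
    (X : Type u) [SemilatticeInf X] (hX : #X ≤ κ) :
    ∃ U : Ultrafilter κ.out,
      (∃ K : ℕ → Set κ.out, (∀ n : ℕ, K n ∈ U) ∧ ⋂ n : ℕ, K n = ∅) ∧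
      (∀ f : X → Set κ.out, (∀ x : X, f x ∈ U) → Monotone f →
        ∃ g : X → Set κ.out,
          (∀ x : X, g x ∈ U) ∧
          (∀ x : X, g x ⊆ f x) ∧
          (∀ x y : X, g (x ⊓ y) = g x ∩ g y)) := by
  haveI hinf : Infinite κ.out := by
    rw [Cardinal.infinite_iff, Cardinal.mk_out]; exact hκ
  have hX' : #(WithTop X) ≤ #κ.out := by
    rw [Cardinal.mk_out]
    have h1 : #(WithTop X) = #X + 1 := Cardinal.mk_option
    rw [h1]
    calc #X + 1 ≤ κ + 1 := add_le_add_left hX 1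
      _ = κ := Cardinal.add_one_eq hκ
  obtain ⟨U, hK, hgood⟩ := Stmt2.core (I := κ.out) (X := WithTop X) hX'
  refine ⟨U, hK, ?_⟩
  intro f hfU hmono
  set f' : WithTop X → Set κ.out := fun o => o.recTopCoe Set.univ f with hf'
  have hf'U : ∀ o : WithTop X, f' o ∈ U := by
    intro o
    induction o using WithTop.recTopCoe with
    | top => exact Filter.univ_mem
    | coe x => exact hfU x
  have hf'mono : Monotone f' := by
    intro a b hab
    induction b using WithTop.recTopCoe with
    | top => exact fun p _ => trivial
    | coe y =>
      induction a using WithTop.recTopCoe with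
      | top => exact absurd hab (WithTop.not_top_le_coe y)
      | coe x => exact hmono (WithTop.coe_le_coe.mp hab)
  obtain ⟨g', hg'U, hg'sub, hg'mult⟩ := hgood f' hf'U hf'mono
  refine ⟨fun x => g' ↑x, fun x => hg'U ↑x, fun x => hg'sub ↑x, ?_⟩
  intro x y
  show g' ((x ⊓ y : X) : WithTop X) = g' (x : WithTop X) ∩ g' (y : WithTop X)
  rw [WithTop.coe_inf, hg'mult]
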